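/- For the split-step implicit tau-leap scheme with linear propensities, if I − τA is invertible then the conditional expectation of one step from state z equals (I − τA)^{-1} z, and this mean iteration is asymptotically stable whenever all eigenvalues λ of A satisfy |1 − τλ| > 1; in particular it is stable for every τ > 0 when all eigenvalues have negative real part. -/

import Mathlib

open MeasureTheory Filter Pointwise
open scoped NNReal ENNReal

section Aux

attribute [local instance] Matrix.linftyOpNormedAddCommGroup Matrix.linftyOpNormedRing
  Matrix.linftyOpNormedAlgebra

lemma aux_pow_mulVec_tendsto_zero {d : ℕ} (B : Matrix (Fin d) (Fin d) ℂ)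
    (hB : ∀ z ∈ spectrum ℂ B, ‖z‖₊ < 1) (v : Fin d → ℂ) :
    Tendsto (fun N : ℕ => (B ^ N).mulVec v) atTop (nhds 0) := by
  rcases Nat.eq_zero_or_pos d with hd | hd
  · subst hd
    have h0 : ∀ N : ℕ, (B ^ N).mulVec v = 0 := fun N => funext fun i => i.elim0
    simpa [h0] using tendsto_const_nhds (α := Fin 0 → ℂ) (f := atTop (α := ℕ))
  · haveI : Nonempty (Fin d) := ⟨⟨0, hd⟩⟩
    haveI : CompleteSpace (Matrix (Fin d) (Fin d) ℂ) := FiniteDimensional.complete ℂ (Matrix (Fin d) (Fin d) ℂ)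
    have hrad : spectralRadius ℂ B < (1 : ℝ≥0) := spectrum.spectralRadius_lt_of_forall_lt B hB
    obtain ⟨r, hr1, hr2⟩ := exists_between hrad
    have hrtop : r ≠ ⊤ := ne_top_of_lt hr2
    set c : NNReal := r.toNNReal with hc
    have hcr : (c : ℝ≥0∞) = r := ENNReal.coe_toNNReal hrtop
    have hc1 : (c : ℝ) < 1 := by
      have := hr2
      rw [← hcr] at this
      exact_mod_cast this
    have hgel := spectrum.pow_nnnorm_pow_one_div_tendsto_nhds_spectralRadius B
    have hev : ∀ᶠ n : ℕ in atTop, ((‖B ^ n‖₊ : ℝ≥0∞) ^ (1 / (n : ℝ))) < r :=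
      hgel.eventually_lt_const hr1
    have hbound : ∀ᶠ n : ℕ in atTop, ‖(B ^ n).mulVec v‖ ≤ (c : ℝ) ^ n * ‖v‖ := by
      filter_upwards [hev, eventually_ge_atTop 1] with n hn hn1
      have hnne : (n : ℝ) ≠ 0 := by positivity
      have h1 : (‖B ^ n‖₊ : ℝ≥0∞) ≤ r ^ (n : ℝ) := by
        have h2 : ((‖B ^ n‖₊ : ℝ≥0∞) ^ (1 / (n : ℝ))) ^ (n : ℝ) ≤ r ^ (n : ℝ) :=
          ENNReal.rpow_le_rpow hn.le (by positivity)
        rwa [← ENNReal.rpow_mul, one_div_mul_cancel hnne, ENNReal.rpow_one] at h2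
      have h3 : ‖B ^ n‖ ≤ (c : ℝ) ^ n := by
        rw [← hcr, ← ENNReal.coe_rpow_of_nonneg _ (by positivity : (0:ℝ) ≤ (n : ℝ)),
          ENNReal.coe_le_coe, NNReal.rpow_natCast] at h1
        exact_mod_cast h1
      calc ‖(B ^ n).mulVec v‖ ≤ ‖B ^ n‖ * ‖v‖ := Matrix.linfty_opNorm_mulVec _ _
        _ ≤ (c : ℝ) ^ n * ‖v‖ := by
            exact mul_le_mul_of_nonneg_right h3 (norm_nonneg _)
    have hg0 : Tendsto (fun n : ℕ => (c : ℝ) ^ n * ‖v‖) atTop (nhds 0) := by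
      simpa using (tendsto_pow_atTop_nhds_zero_of_lt_one c.coe_nonneg hc1).mul_const ‖v‖
    exact squeeze_zero_norm' hbound hg0

/-- If all eigenvalues `lam` of `Ac` satisfy `|1 - τ lam| > 1` then `1 - τ • Ac` is a unit. -/
lemma aux_isUnit {d : ℕ} (Ac : Matrix (Fin d) (Fin d) ℂ) (τ : ℝ) (hτ : 0 < τ)
    (hspec : ∀ lam ∈ spectrum ℂ Ac, 1 < ‖1 - (τ : ℂ) * lam‖) :
    IsUnit (1 - (τ : ℂ) • Ac) := by
  by_contra h
  have h0 : (0 : ℂ) ∈ spectrum ℂ (1 - (τ : ℂ) • Ac) := (spectrum.zero_mem_iff ℂ).mpr h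
  have hτu : IsUnit (τ : ℂ) := by
    simp [isUnit_iff_ne_zero, Complex.ofReal_ne_zero, hτ.ne']
  have hsm : spectrum ℂ ((τ : ℂ) • Ac) = (τ : ℂ) • spectrum ℂ Ac := by
    simpa using spectrum.unit_smul_eq_smul Ac hτu.unit
  have hσ : spectrum ℂ (1 - (τ : ℂ) • Ac) = {(1 : ℂ)} - (τ : ℂ) • spectrum ℂ Ac := by
    rw [← hsm, spectrum.singleton_sub_eq, map_one]
  rw [hσ, Set.mem_sub] at h0
  obtain ⟨a, ha, b, hb, hab⟩ := h0
  rw [Set.mem_singleton_iff] at ha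
  obtain ⟨lam, hlam, rfl⟩ := hb
  subst ha
  simp only [smul_eq_mul] at hab
  have h2 := hspec lam hlam
  rw [hab] at h2
  norm_num at h2

lemma aux_spectrum_inv {d : ℕ} (Ac : Matrix (Fin d) (Fin d) ℂ) (τ : ℝ) (hτ : 0 < τ)
    (hspec : ∀ lam ∈ spectrum ℂ Ac, 1 < ‖1 - (τ : ℂ) * lam‖) :
    ∀ w ∈ spectrum ℂ ((1 - (τ : ℂ) • Ac)⁻¹), ‖w‖₊ < 1 := by
  intro w hw
  have hu : IsUnit (1 - (τ : ℂ) • Ac) := aux_isUnit Ac τ hτ hspec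
  have hinv_eq : (1 - (τ : ℂ) • Ac)⁻¹ = ((hu.unit⁻¹ : (Matrix (Fin d) (Fin d) ℂ)ˣ) : Matrix (Fin d) (Fin d) ℂ) := by
    rw [Matrix.coe_units_inv, IsUnit.unit_spec]
  rw [hinv_eq, ← spectrum.map_inv, Set.mem_inv] at hw
  rw [IsUnit.unit_spec] at hw
  have hτu : IsUnit (τ : ℂ) := by
    simp [isUnit_iff_ne_zero, Complex.ofReal_ne_zero, hτ.ne']
  have hsm : spectrum ℂ ((τ : ℂ) • Ac) = (τ : ℂ) • spectrum ℂ Ac := by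
    simpa using spectrum.unit_smul_eq_smul Ac hτu.unit
  have hσ : spectrum ℂ (1 - (τ : ℂ) • Ac) = {(1 : ℂ)} - (τ : ℂ) • spectrum ℂ Ac := by
    rw [← hsm, spectrum.singleton_sub_eq, map_one]
  rw [hσ, Set.mem_sub] at hw
  obtain ⟨a, ha, b, hb, hab⟩ := hw
  rw [Set.mem_singleton_iff] at ha
  obtain ⟨lam, hlam, rfl⟩ := hb
  subst ha
  have h1 : 1 < ‖w⁻¹‖ := by
    simp only [smul_eq_mul] at hab
    rw [← hab]
    exact hspec lam hlam
  have hwabs : ‖w‖ < 1 := by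
    rcases eq_or_ne w 0 with h | h
    · simp [h]
    · rw [norm_inv] at h1
      have habs : 0 < ‖w‖ := by
        simpa [norm_pos_iff] using h
      rw [lt_inv_comm₀ zero_lt_one habs] at h1
      simpa using h1
  have : ‖w‖ < 1 := by simpa using hwabs
  exact_mod_cast this

end Aux

/-- Split-step implicit tau-leap with linear propensities `a_j(x) = c_jᵀ x`:
if `I - τA` is invertible then the mean of one step from state `z` equals
`(I - τA)⁻¹ z`; the mean iteration is asymptotically stable whenever all
eigenvalues `λ` of `A` satisfy `|1 - τλ| > 1`; and this holds for every `τ > 0`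
when all eigenvalues have negative real part. -/
theorem ssi_tl_mean_and_stability
    {Ω : Type*} [MeasurableSpace Ω] (μ : Measure Ω) [IsProbabilityMeasure μ]
    (d J : ℕ) (ν c : Fin J → Fin d → ℝ) (τ : ℝ) (hτ : 0 < τ)
    (A : Matrix (Fin d) (Fin d) ℝ)
    (hA : A = ∑ j, Matrix.of fun i k => ν j i * c j k)
    (hinv : IsUnit (1 - τ • A))
    (z y : Fin d → ℝ)
    (hy : (1 - τ • A).mulVec y = z)
    (P : Fin J → Ω → ℝ)
    (hint : ∀ j, Integrable (P j) μ)
    (hrate_nonneg : ∀ j, 0 ≤ (∑ i, c j i * y i) * τ)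
    (hmean : ∀ j, ∫ ω, P j ω ∂μ = (∑ i, c j i * y i) * τ) :
    (∀ i, (∫ ω, (z i + ∑ j, P j ω * ν j i) ∂μ) = ((1 - τ • A)⁻¹.mulVec z) i)
    ∧ ((∀ lam ∈ spectrum ℂ (A.map (Complex.ofReal)),
          1 < ‖1 - (τ : ℂ) * lam‖) →
        ∀ v : Fin d → ℂ,
          Tendsto (fun N : ℕ => (((1 - (τ : ℂ) • A.map (Complex.ofReal))⁻¹) ^ N).mulVec v)
            atTop (nhds 0))
    ∧ ((∀ lam ∈ spectrum ℂ (A.map (Complex.ofReal)), lam.re < 0) →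
        ∀ lam ∈ spectrum ℂ (A.map (Complex.ofReal)),
          1 < ‖1 - (τ : ℂ) * lam‖) := by
  refine ⟨?_, ?_, ?_⟩
  · -- mean of one step
    intro i
    have hdet : IsUnit (1 - τ • A).det := (Matrix.isUnit_iff_isUnit_det _).mp hinv
    have hyinv : (1 - τ • A)⁻¹.mulVec z = y := by
      rw [← hy, Matrix.mulVec_mulVec, Matrix.nonsing_inv_mul _ hdet, Matrix.one_mulVec]
    rw [hyinv]
    have hint2 : Integrable (fun ω => ∑ j, P j ω * ν j i) μ :=
      integrable_finset_sum _ fun j _ => (hint j).mul_const _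
    rw [integral_add (integrable_const _) hint2, integral_const, probReal_univ,
      smul_eq_mul, one_mul, integral_finset_sum _ fun j _ => (hint j).mul_const _]
    have hsum : ∀ j, (∫ ω, P j ω * ν j i ∂μ) = ((∑ i', c j i' * y i') * τ) * ν j i := by
      intro j
      rw [integral_mul_const, hmean j]
    simp only [hsum]
    -- now use hy to express z i
    have hz : z i = y i - τ * ∑ k, A i k * y k := by
      rw [← hy]
      simp [Matrix.mulVec, dotProduct, Matrix.sub_apply, Matrix.smul_apply,
        Matrix.one_apply, sub_mul, Finset.sum_sub_distrib, Finset.sum_ite_eq,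
        Finset.mul_sum, mul_assoc]
    rw [hz, hA]
    simp only [Matrix.sum_apply, Matrix.of_apply]
    have hswap : ∑ k, (∑ j, ν j i * c j k) * y k = ∑ j, ν j i * ∑ k, c j k * y k := by
      simp_rw [Finset.sum_mul, Finset.mul_sum]
      rw [Finset.sum_comm]
      simp_rw [mul_assoc]
    rw [hswap, Finset.mul_sum]
    have heq : ∀ j : Fin J, τ * (ν j i * ∑ k, c j k * y k) = (∑ i', c j i' * y i') * τ * ν j i :=
      fun j => by ring
    simp_rw [heq]
    ring
  · -- stability from the spectral condition
    intro hspec v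
    exact aux_pow_mulVec_tendsto_zero _ (aux_spectrum_inv (A.map Complex.ofReal) τ hτ hspec) v
  · -- negative real parts give the spectral condition
    intro hre lam hlam
    have h := hre lam hlam
    have habs : (1 : ℝ) < ‖1 - (τ : ℂ) * lam‖ ^ 2 := by
      rw [Complex.sq_norm, Complex.normSq_apply]
      simp only [Complex.sub_re, Complex.sub_im, Complex.one_re, Complex.one_im,
        Complex.mul_re, Complex.mul_im, Complex.ofReal_re, Complex.ofReal_im]
      nlinarith [mul_pos hτ (neg_pos.mpr h), sq_nonneg (τ * lam.im), sq_nonneg (τ * lam.re)]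
    nlinarith [norm_nonneg (1 - (τ : ℂ) * lam)]
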